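/- Let L_1, ..., L_m be pairwise commensurable grids in R^d. Then there exist a lattice L of covolume one in R^d, a positive integer r, positive real numbers c_1, ..., c_r, and vectors v_1, ..., v_r ∈ R^d such that L_1 ∪ ... ∪ L_m = ⋃_{i=1}^r c_i(L + v_i). Moreover one can choose this representation so that for all i ≠ i' in {1,…,r}, if c_i/c_{i'} ∈ Q then c_i(L + v_i) ∩ c_{i'}(L + v_{i'}) = ∅. -/

import Mathlib

/-- A full-rank lattice in ℝ^d: the ℤ-span of an ℝ-basis of ℝ^d. -/
def IsLattice {d : ℕ} (Λ : Set (Fin d → ℝ)) : Prop :=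
  ∃ b : Module.Basis (Fin d) ℝ (Fin d → ℝ),
    Λ = (Submodule.span ℤ (Set.range ⇑b) : Set (Fin d → ℝ))

/-- A full-rank lattice of covolume one in ℝ^d. -/
def IsUnimodularLattice {d : ℕ} (Λ : Set (Fin d → ℝ)) : Prop :=
  ∃ b : Module.Basis (Fin d) ℝ (Fin d → ℝ),
    |(Matrix.of fun i j => b i j).det| = 1 ∧
    Λ = (Submodule.span ℤ (Set.range ⇑b) : Set (Fin d → ℝ))

/-- A grid in ℝ^d: a translate of a full-rank lattice. -/
def IsGrid {d : ℕ} (L : Set (Fin d → ℝ)) : Prop :=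
  ∃ (v : Fin d → ℝ) (Λ : Set (Fin d → ℝ)), IsLattice Λ ∧ L = (fun x => v + x) '' Λ

/-- Two grids `L`, `L'` are commensurable if there exist `δ > 0` and `v` such that
`L ∩ (δ L' + v)` is a grid. -/
def GridCommensurable {d : ℕ} (L L' : Set (Fin d → ℝ)) : Prop :=
  ∃ δ : ℝ, 0 < δ ∧ ∃ v : Fin d → ℝ, IsGrid (L ∩ ((fun x => δ • x + v) '' L'))



open Submodule Set

variable {d : ℕ}

private def latt {d : ℕ} (b : Module.Basis (Fin d) ℝ (Fin d → ℝ)) : Submodule ℤ (Fin d → ℝ) :=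
  span ℤ (Set.range ⇑b)

private theorem exists_nat_smul_mem (b b' : Module.Basis (Fin d) ℝ (Fin d → ℝ))
    (h : latt b' ≤ latt b) :
    ∃ n : ℕ, 0 < n ∧ ∀ x ∈ latt b, (n : ℝ) • x ∈ latt b' := by
  classical
  have hC : ∀ j, ∃ c : Fin d → ℤ, ∑ i, c i • b i = b' j := by
    intro j
    exact (mem_span_range_iff_exists_fun ℤ).mp (h (subset_span ⟨j, rfl⟩))
  choose C hCspec using hC
  set Cm : Matrix (Fin d) (Fin d) ℤ := Matrix.of C with hCm
  have hdet : Cm.det ≠ 0 := by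
    intro h0
    have h0' : (Cm.map (Int.cast : ℤ → ℝ)).det = 0 := by
      have := (RingHom.map_det (Int.castRingHom ℝ) Cm).symm
      rw [RingHom.mapMatrix_apply] at this
      show (Cm.map ⇑(Int.castRingHom ℝ)).det = 0
      rw [this, h0]; simp
    obtain ⟨v, hv0, hv⟩ := Matrix.exists_vecMul_eq_zero_iff.mpr h0'
    apply hv0
    have hlin : ∑ j, v j • b' j = 0 := by
      have hb' : ∀ j, b' j = ∑ i, ((C j i : ℝ)) • b i := by
        intro j; rw [← hCspec j]
        exact (Finset.sum_congr rfl fun i _ => by rw [Int.cast_smul_eq_zsmul]).symm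
      calc ∑ j, v j • b' j = ∑ j, ∑ i, (v j * (C j i : ℝ)) • b i := by
            simp_rw [hb', Finset.smul_sum, smul_smul]
        _ = ∑ i, ∑ j, (v j * (C j i : ℝ)) • b i := Finset.sum_comm
        _ = 0 := by
            apply Finset.sum_eq_zero; intro i _
            rw [← Finset.sum_smul]
            have h2 := congrFun hv i
            simp only [Matrix.vecMul, dotProduct, Matrix.map_apply, Pi.zero_apply] at h2
            have : ∑ j, v j * (C j i : ℝ) = 0 := h2
            rw [this, zero_smul]
    have := Fintype.linearIndependent_iff.mp b'.linearIndependent v hlin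
    funext j; exact this j
  have hmem : ∀ k, (Cm.det : ℤ) • b k ∈ latt b' := by
    intro k
    have hadj := Matrix.adjugate_mul Cm
    have key : ∑ j, (Cm.adjugate k j) • b' j = (Cm.det : ℤ) • b k := by
      calc ∑ j, (Cm.adjugate k j) • b' j
          = ∑ j, ∑ i, (Cm.adjugate k j * C j i) • b i := by
            simp_rw [← hCspec, Finset.smul_sum, smul_smul]
        _ = ∑ i, ∑ j, (Cm.adjugate k j * C j i) • b i := Finset.sum_comm
        _ = ∑ i, ((Cm.adjugate * Cm) k i) • b i := by
            apply Finset.sum_congr rfl; intro i _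
            rw [← Finset.sum_smul]; rfl
        _ = (Cm.det : ℤ) • b k := by
            rw [hadj]
            rw [Finset.sum_eq_single k]
            · simp [Matrix.smul_apply, Matrix.one_apply]
            · intro i _ hik
              simp [Matrix.smul_apply, Matrix.one_apply_ne' hik]
            · simp
    rw [← key]
    exact Submodule.sum_mem _ fun j _ => Submodule.smul_mem _ _ (subset_span ⟨j, rfl⟩)
  refine ⟨Cm.det.natAbs, Int.natAbs_pos.mpr hdet, ?_⟩
  intro x hx
  obtain ⟨c, hc⟩ := (mem_span_range_iff_exists_fun ℤ).mp hx
  have hsm : (Cm.det.natAbs : ℝ) • x = ∑ i, c i • (((Cm.det.natAbs : ℤ)) • b i) := by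
    rw [← hc, Finset.smul_sum]
    apply Finset.sum_congr rfl; intro i _
    rw [smul_comm]
    congr 1
    have h3 : ((Cm.det.natAbs : ℝ)) = (((Cm.det.natAbs : ℤ)) : ℝ) := (Int.cast_natCast _).symm
    rw [h3, Int.cast_smul_eq_zsmul]
  rw [hsm]
  refine Submodule.sum_mem _ fun i _ => Submodule.smul_mem _ _ ?_
  rcases Int.natAbs_eq Cm.det with he | he
  · rw [← he]; exact hmem i
  · have : ((Cm.det.natAbs : ℤ)) • b i = -((Cm.det : ℤ) • b i) := by
      rw [← neg_smul]; congr 1; omega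
    rw [this]
    exact Submodule.neg_mem _ (hmem i)


variable {d : ℕ}

/-- scaled basis -/
private noncomputable def bsc (t : ℝ) (ht : t ≠ 0) (b : Module.Basis (Fin d) ℝ (Fin d → ℝ)) :
    Module.Basis (Fin d) ℝ (Fin d → ℝ) :=
  b.map (LinearEquiv.smulOfNeZero ℝ _ t ht)

private theorem bsc_apply (t : ℝ) (ht : t ≠ 0) (b : Module.Basis (Fin d) ℝ (Fin d → ℝ)) (i : Fin d) :
    bsc t ht b i = t • b i := by
  simp [bsc, LinearEquiv.smulOfNeZero, LinearEquiv.smulOfUnit, DistribMulAction.toLinearEquiv]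

private theorem mem_latt_bsc (t : ℝ) (ht : t ≠ 0) (b : Module.Basis (Fin d) ℝ (Fin d → ℝ))
    (x : Fin d → ℝ) : x ∈ latt (bsc t ht b) ↔ ∃ y ∈ latt b, t • y = x := by
  constructor
  · intro hx
    obtain ⟨c, hc⟩ := (mem_span_range_iff_exists_fun ℤ).mp hx
    refine ⟨∑ i, c i • b i, Submodule.sum_mem _ fun i _ =>
      Submodule.smul_mem _ _ (subset_span ⟨i, rfl⟩), ?_⟩
    rw [← hc, Finset.smul_sum]
    exact Finset.sum_congr rfl fun i _ => by
      rw [bsc_apply, smul_comm]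
  · rintro ⟨y, hy, rfl⟩
    obtain ⟨c, hc⟩ := (mem_span_range_iff_exists_fun ℤ).mp hy
    rw [← hc, Finset.smul_sum]
    apply Submodule.sum_mem _ fun i _ => ?_
    rw [smul_comm, ← bsc_apply t ht]
    exact Submodule.smul_mem _ _ (subset_span ⟨i, rfl⟩)

/-- difference lemma: a translate of a lattice contained in a translate of a lattice -/
private theorem latt_le_of_translate_subset (g b : Module.Basis (Fin d) ℝ (Fin d → ℝ))
    (u w : Fin d → ℝ)
    (h : (fun x => u + x) '' (latt g : Set (Fin d → ℝ)) ⊆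
         (fun x => w + x) '' (latt b : Set (Fin d → ℝ))) :
    latt g ≤ latt b := by
  intro x hx
  obtain ⟨y, hy, hy'⟩ := h ⟨x, hx, rfl⟩
  obtain ⟨y0, hy0, hy0'⟩ := h ⟨0, Submodule.zero_mem _, rfl⟩
  have : x = y - y0 := by
    have h1 : u + x = w + y := hy'.symm
    have h2 : u + 0 = w + y0 := hy0'.symm
    have := congrArg₂ (· - ·) h1 h2
    simpa using this
  rw [this]
  exact Submodule.sub_mem _ hy hy0

/-- basis rows have nonzero determinant -/
private theorem det_basis_ne_zero (b : Module.Basis (Fin d) ℝ (Fin d → ℝ)) :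
    (Matrix.of fun i j => b i j).det ≠ 0 := by
  intro h0
  obtain ⟨v, hv0, hv⟩ := Matrix.exists_vecMul_eq_zero_iff.mpr h0
  apply hv0
  have hlin : ∑ j, v j • b j = 0 := by
    funext i
    have h2 := congrFun hv i
    simp only [Matrix.vecMul, dotProduct, Matrix.of_apply, Pi.zero_apply] at h2
    simpa [Finset.sum_apply] using h2
  have := Fintype.linearIndependent_iff.mp b.linearIndependent v hlin
  funext j; exact this j

/-- translates of a "scaled lattice" set are equal or disjoint -/
private theorem coset_eq_or_disjoint (S : Submodule ℤ (Fin d → ℝ)) (x y : Fin d → ℝ) :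
    ((fun z => x + z) '' (S : Set (Fin d → ℝ)) = (fun z => y + z) '' (S : Set (Fin d → ℝ))) ∨
    Disjoint ((fun z => x + z) '' (S : Set (Fin d → ℝ)))
      ((fun z => y + z) '' (S : Set (Fin d → ℝ))) := by
  by_cases hdis : Disjoint ((fun z => x + z) '' (S : Set (Fin d → ℝ)))
      ((fun z => y + z) '' (S : Set (Fin d → ℝ)))
  · exact Or.inr hdis
  · left
    rw [Set.not_disjoint_iff] at hdis
    obtain ⟨z, ⟨a, ha, haz⟩, ⟨a', ha', haz'⟩⟩ := hdis
    ext p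
    constructor
    · rintro ⟨q, hq, rfl⟩
      refine ⟨a' - a + q, Submodule.add_mem _ (Submodule.sub_mem _ ha' ha) hq, ?_⟩
      have : x + a = y + a' := by simp only [] at haz haz'; rw [haz, haz']
      have hyx : y = x + a - a' := by rw [this]; abel
      rw [hyx]; abel
    · rintro ⟨q, hq, rfl⟩
      refine ⟨a - a' + q, Submodule.add_mem _ (Submodule.sub_mem _ ha ha') hq, ?_⟩
      have : x + a = y + a' := by simp only [] at haz haz'; rw [haz, haz']
      have hyx : x = y + a' - a := by rw [← this]; abel
      rw [hyx]; abel

private theorem latt_congr (b b' : Module.Basis (Fin d) ℝ (Fin d → ℝ)) (h : ⇑b = ⇑b') :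
    latt b = latt b' := by unfold latt; rw [h]

private theorem xa_mem (b : Module.Basis (Fin d) ℝ (Fin d → ℝ)) (a : Fin d → ℤ) :
    ∑ i, a i • b i ∈ latt b :=
  Submodule.sum_mem _ fun i _ => Submodule.smul_mem _ _ (subset_span ⟨i, rfl⟩)

/-- cover lemma -/
private theorem cover_lemma (b : Module.Basis (Fin d) ℝ (Fin d → ℝ)) (S : Submodule ℤ (Fin d → ℝ))
    (p : ℕ) (hp : 0 < p) (hmul : ∀ x ∈ latt b, (p : ℝ) • x ∈ S) :
    ∀ x ∈ latt b, ∃ a : Fin d → Fin p, x - ∑ i, ((a i : ℤ)) • b i ∈ S := by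
  intro x hx
  obtain ⟨e, he⟩ := (mem_span_range_iff_exists_fun ℤ).mp hx
  have hp' : (0:ℤ) < (p:ℤ) := by exact_mod_cast hp
  refine ⟨fun i => ⟨(e i % p).toNat, ?_⟩, ?_⟩
  · have h1 := Int.emod_nonneg (e i) (by omega : (p:ℤ) ≠ 0)
    have h2 := Int.emod_lt_of_pos (e i) hp'
    omega
  · have hcast : ∀ i, ((⟨(e i % p).toNat, by
        have h1 := Int.emod_nonneg (e i) (by omega : (p:ℤ) ≠ 0)
        have h2 := Int.emod_lt_of_pos (e i) hp'
        omega⟩ : Fin p) : ℤ) = e i % p := by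
      intro i
      have h1 := Int.emod_nonneg (e i) (by omega : (p:ℤ) ≠ 0)
      simp; omega
    have key : x - ∑ i, (e i % p) • b i = (p:ℝ) • ∑ i, (e i / p) • b i := by
      rw [← he, ← Finset.sum_sub_distrib, Finset.smul_sum]
      apply Finset.sum_congr rfl; intro i _
      rw [← sub_smul]
      have : e i - e i % p = (p:ℤ) * (e i / p) := by
        have := Int.mul_ediv_add_emod (e i) (p:ℤ); omega
      rw [this, mul_smul, ← Int.cast_smul_eq_zsmul ℝ ((p:ℤ))]
      norm_num
    have hmem : (p:ℝ) • ∑ i, (e i / p) • b i ∈ S := hmul _ (xa_mem b _)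
    have hsum : ∑ i, ((⟨(e i % p).toNat, by
        have h1 := Int.emod_nonneg (e i) (by omega : (p:ℤ) ≠ 0)
        have h2 := Int.emod_lt_of_pos (e i) hp'
        omega⟩ : Fin p) : ℤ) • b i = ∑ i, (e i % p) • b i := by
      apply Finset.sum_congr rfl; intro i _; rw [hcast]
    rw [hsum, key]; exact hmem

/-- unimodular rescaling -/
private theorem exists_unimodular_scale (b : Module.Basis (Fin d) ℝ (Fin d → ℝ)) :
    ∃ γ : ℝ, 0 < γ ∧ ∃ bu : Module.Basis (Fin d) ℝ (Fin d → ℝ),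
      |(Matrix.of fun i j => bu i j).det| = 1 ∧ ∀ i, bu i = γ⁻¹ • b i := by
  classical
  set M : Matrix (Fin d) (Fin d) ℝ := Matrix.of fun i j => b i j with hM
  have hdet : M.det ≠ 0 := by
    intro h0
    obtain ⟨v, hv0, hv⟩ := Matrix.exists_vecMul_eq_zero_iff.mpr h0
    apply hv0
    have hlin : ∑ j, v j • b j = 0 := by
      funext i
      have h2 := congrFun hv i
      simp only [Matrix.vecMul, dotProduct, Matrix.of_apply, Pi.zero_apply, hM] at h2
      simpa [Finset.sum_apply] using h2
    have := Fintype.linearIndependent_iff.mp b.linearIndependent v hlin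
    funext j; exact this j
  set D : ℝ := |M.det| with hD
  have hDpos : 0 < D := abs_pos.mpr hdet
  set γ : ℝ := D ^ ((d:ℝ)⁻¹) with hγ
  have hγpos : 0 < γ := Real.rpow_pos_of_pos hDpos _
  have hγd : γ ^ d = D := by
    rcases Nat.eq_zero_or_pos d with h0 | hd0
    · subst h0
      simp only [pow_zero]
      rw [hD, hM]
      rw [Matrix.det_isEmpty]
      simp
    · rw [hγ, ← Real.rpow_natCast (D ^ ((d:ℝ)⁻¹)) d, ← Real.rpow_mul hDpos.le]
      rw [inv_mul_cancel₀ (by exact_mod_cast hd0.ne' : (d:ℝ) ≠ 0)]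
      exact Real.rpow_one D
  refine ⟨γ, hγpos, bsc γ⁻¹ (by positivity) b, ?_, fun i => bsc_apply _ _ _ i⟩
  have hmat : (Matrix.of fun i j => bsc γ⁻¹ (by positivity) b i j) = γ⁻¹ • M := by
    ext i j
    rw [Matrix.of_apply, bsc_apply]
    simp [hM]
  rw [hmat, Matrix.det_smul, abs_mul, abs_pow, abs_inv, abs_of_pos hγpos]
  rw [Fintype.card_fin]
  rw [← hD, inv_pow, hγd]
  field_simp

/-- affine image of a translated lattice -/
private theorem image_affine (t : ℝ) (ht : t ≠ 0) (vv ww : Fin d → ℝ)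
    (b : Module.Basis (Fin d) ℝ (Fin d → ℝ)) :
    (fun x => t • x + vv) '' ((fun x => ww + x) '' (latt b : Set (Fin d → ℝ))) =
    (fun x => (t • ww + vv) + x) '' (latt (bsc t ht b) : Set (Fin d → ℝ)) := by
  have hmem : ∀ x : Fin d → ℝ, x ∈ latt (bsc t ht b) ↔ ∃ y ∈ latt b, t • y = x := by
    intro x
    constructor
    · intro hx
      obtain ⟨c, hc⟩ := (mem_span_range_iff_exists_fun ℤ).mp hx
      refine ⟨∑ i, c i • b i, xa_mem b _, ?_⟩
      rw [← hc, Finset.smul_sum]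
      exact Finset.sum_congr rfl fun i _ => by rw [bsc_apply, smul_comm]
    · rintro ⟨y, hy, rfl⟩
      obtain ⟨c, hc⟩ := (mem_span_range_iff_exists_fun ℤ).mp hy
      rw [← hc, Finset.smul_sum]
      apply Submodule.sum_mem _ fun i _ => ?_
      rw [smul_comm, ← bsc_apply t ht]
      exact Submodule.smul_mem _ _ (subset_span ⟨i, rfl⟩)
  ext x
  simp only [Set.mem_image, exists_exists_and_eq_and]
  constructor
  · rintro ⟨y, hy, rfl⟩
    exact ⟨t • y, (hmem _).mpr ⟨y, hy, rfl⟩, by rw [smul_add]; abel⟩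
  · rintro ⟨z, hz, rfl⟩
    obtain ⟨y, hy, rfl⟩ := (hmem _).mp hz
    exact ⟨y, hy, by rw [smul_add]; abel⟩

/-- Lemma: a finite family of pairwise commensurable grids can be written as a finite
union of dilated translates `c_i (L + v_i)` of a single covolume-one lattice `L`, and
moreover so that grids with rationally related dilation factors are disjoint. -/
theorem union_of_commensurable_grids (d m : ℕ) (hm : 1 ≤ m)
    (L : Fin m → Set (Fin d → ℝ))
    (hgrid : ∀ i, IsGrid (L i))
    (hcomm : ∀ i j, GridCommensurable (L i) (L j)) :
    ∃ Λ : Set (Fin d → ℝ), IsUnimodularLattice Λ ∧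
      ∃ r : ℕ, 0 < r ∧
        ∃ (c : Fin r → ℝ) (v : Fin r → (Fin d → ℝ)),
          (∀ i, 0 < c i) ∧
          (⋃ i, L i) = ⋃ i, (fun x => c i • (x + v i)) '' Λ ∧
          (∀ i i' : Fin r, i ≠ i' → (∃ q : ℚ, c i / c i' = (q : ℝ)) →
            Disjoint ((fun x => c i • (x + v i)) '' Λ)
              ((fun x => c i' • (x + v i')) '' Λ)) := by
  classical
  set z : Fin m := ⟨0, hm⟩ with hz
  -- unpack grids
  choose w Λg hlat hL using hgrid
  choose bb hbb using hlat
  have hLL : ∀ i, L i = (fun x => w i + x) '' (latt (bb i) : Set (Fin d → ℝ)) := by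
    intro i; rw [hL i, hbb i]; rfl
  -- unpack commensurability with z
  choose δ hδ vv hG using fun j => hcomm z j
  choose u Gl hGl hGeq using hG
  choose gg hgg using hGl
  have hGset : ∀ j, L z ∩ ((fun x => δ j • x + vv j) '' L j)
      = (fun x => u j + x) '' (latt (gg j) : Set (Fin d → ℝ)) := by
    intro j; rw [hGeq j, hgg j]; rfl
  have hδ0 : ∀ j, δ j ≠ 0 := fun j => (hδ j).ne'
  have h1 : ∀ j, latt (gg j) ≤ latt (bb z) := by
    intro j
    apply latt_le_of_translate_subset (gg j) (bb z) (u j) (w z)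
    rw [← hGset j, ← hLL z]
    exact Set.inter_subset_left
  have h2 : ∀ j, latt (gg j) ≤ latt (bsc (δ j) (hδ0 j) (bb j)) := by
    intro j
    apply latt_le_of_translate_subset (gg j) _ (u j) (δ j • w j + vv j)
    rw [← image_affine (δ j) (hδ0 j) (vv j) (w j) (bb j), ← hGset j, ← hLL j]
    exact Set.inter_subset_right
  choose n hn hnmem using fun j => exists_nat_smul_mem (bb z) (gg j) (h1 j)
  have hstep : ∀ j, ∀ x ∈ latt (bb z), ∃ y ∈ latt (bb j), δ j • y = (n j : ℝ) • x := by
    intro j x hx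
    exact (mem_latt_bsc _ _ _ _).mp (h2 j (hnmem j x hx))
  -- equivalence classes of scales
  set rel : Fin m → Fin m → Prop := fun a b => ∃ q : ℚ, (q : ℝ) * δ b = δ a with hrel
  have rel_refl : ∀ a, rel a a := fun a => ⟨1, by norm_num⟩
  have rel_symm : ∀ {a b}, rel a b → rel b a := by
    rintro a b ⟨q, hq⟩
    have hq0 : (q : ℝ) ≠ 0 := by
      intro h; rw [h, zero_mul] at hq; exact (hδ a).ne' hq.symm
    refine ⟨q⁻¹, ?_⟩
    push_cast
    rw [← hq]; field_simp
  have rel_trans : ∀ {a b c}, rel a b → rel b c → rel a c := by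
    rintro a b c ⟨q, hq⟩ ⟨q', hq'⟩
    exact ⟨q * q', by push_cast; rw [mul_assoc, hq', hq]⟩
  have hfilter_ne : ∀ j, (Finset.univ.filter (fun j' => rel j' j)).Nonempty :=
    fun j => ⟨j, by simp [rel_refl j]⟩
  set rep : Fin m → Fin m :=
    fun j => (Finset.univ.filter (fun j' => rel j' j)).min' (hfilter_ne j) with hrepdef
  have min'_congr : ∀ (s t : Finset (Fin m)) (hs : s.Nonempty) (ht : t.Nonempty),
      s = t → s.min' hs = t.min' ht := by rintro s t hs ht rfl; rfl
  have hrep_mem : ∀ j, rel (rep j) j := by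
    intro j
    have := Finset.min'_mem (Finset.univ.filter (fun j' => rel j' j)) (hfilter_ne j)
    simpa using this
  have hrep_eq : ∀ {a b}, rel a b → rep a = rep b := by
    intro a b hab
    exact min'_congr _ _ (hfilter_ne a) (hfilter_ne b) (by
      ext j'; simp only [Finset.mem_filter, Finset.mem_univ, true_and]
      exact ⟨fun h => rel_trans h hab, fun h => rel_trans h (rel_symm hab)⟩)
  choose ρ hρ using fun j => hrep_mem j
  have hρpos : ∀ j, 0 < ρ j := by
    intro j
    have hcast : (ρ j : ℝ) = δ (rep j) / δ j := by
      rw [eq_div_iff (hδ0 j)]; exact hρ j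
    have : (0 : ℝ) < (ρ j : ℝ) := by rw [hcast]; exact div_pos (hδ (rep j)) (hδ j)
    exact_mod_cast this
  set nm : Fin m → ℕ := fun j => (ρ j).num.toNat with hnmdef
  have hnm : ∀ j, ((nm j : ℤ)) = (ρ j).num := by
    intro j
    exact Int.toNat_of_nonneg (Rat.num_pos.mpr (hρpos j)).le
  have hnmpos : ∀ j, 0 < nm j := by
    intro j
    have := Rat.num_pos.mpr (hρpos j)
    simp only [hnmdef]
    omega
  set K : ℕ := ∏ j, (n j * nm j) with hKdef
  have hKpos : 0 < K := Finset.prod_pos fun j _ => Nat.mul_pos (hn j) (hnmpos j)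
  set s : Fin m → ℝ := fun j => (δ (rep j))⁻¹ * K with hsdef
  have hspos : ∀ j, 0 < s j :=
    fun j => mul_pos (inv_pos.mpr (hδ (rep j))) (by exact_mod_cast hKpos)
  have hs0 : ∀ j, s j ≠ 0 := fun j => (hspos j).ne'
  set k : Fin m → ℕ := fun j => (ρ j).den * ∏ j' ∈ Finset.univ.erase j, (n j' * nm j')
    with hkdef
  have hkey : ∀ j, s j = ((n j : ℝ) * (δ j)⁻¹) * (k j : ℝ) := by
    intro j
    have hKfac : K = (n j * nm j) * ∏ j' ∈ Finset.univ.erase j, (n j' * nm j') := by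
      rw [hKdef, ← Finset.mul_prod_erase Finset.univ _ (Finset.mem_univ j)]
    have hρℝ0 : (ρ j : ℝ) ≠ 0 := by
      have : (0:ℝ) < (ρ j : ℝ) := by exact_mod_cast hρpos j
      exact this.ne'
    have hδinv : (δ j)⁻¹ = (ρ j : ℝ) * (δ (rep j))⁻¹ := by
      have h1 : δ j = δ (rep j) / (ρ j : ℝ) := by
        rw [eq_div_iff hρℝ0, mul_comm]; exact hρ j
      rw [h1, div_eq_mul_inv, mul_inv, inv_inv, mul_comm]
    have hρcast : (ρ j : ℝ) = (nm j : ℝ) / ((ρ j).den : ℝ) := by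
      rw [Rat.cast_def]
      congr 1
      exact_mod_cast (hnm j).symm
    have hden0 : ((ρ j).den : ℝ) ≠ 0 := by
      exact_mod_cast (ρ j).den_nz
    rw [hsdef]
    simp only []
    rw [hδinv, hρcast, hkdef]
    simp only []
    push_cast [hKfac]
    field_simp
  have hSsub : ∀ j, latt (bsc (s j) (hs0 j) (bb z)) ≤ latt (bb j) := by
    intro j x hx
    obtain ⟨y, hy, rfl⟩ := (mem_latt_bsc _ _ _ _).mp hx
    have hky : (k j : ℝ) • y ∈ latt (bb z) := by
      have h' : ((k j : ℤ)) • y ∈ latt (bb z) := Submodule.smul_mem _ _ hy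
      rwa [← Int.cast_smul_eq_zsmul ℝ ((k j : ℤ)), Int.cast_natCast] at h'
    obtain ⟨y', hy', hδy'⟩ := hstep j _ hky
    have hfin : s j • y = y' := by
      rw [hkey j]
      have hrw : ((n j : ℝ) * (δ j)⁻¹ * (k j : ℝ)) • y
          = (δ j)⁻¹ • ((n j : ℝ) • ((k j : ℝ) • y)) := by
        rw [smul_smul, smul_smul]; ring_nf
      rw [hrw, ← hδy', smul_smul, inv_mul_cancel₀ (hδ0 j), one_smul]
    rw [hfin]; exact hy'
  choose p hp hpmem using fun j => exists_nat_smul_mem (bb j) (bsc (s j) (hs0 j) (bb z)) (hSsub j)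
  have cover := fun j => cover_lemma (bb j) (latt (bsc (s j) (hs0 j) (bb z))) (p j) (hp j) (hpmem j)
  obtain ⟨γ, hγpos, bu, hbu1, hbuv⟩ := exists_unimodular_scale (bb z)
  have hγ0 : γ ≠ 0 := hγpos.ne'
  have hUeq : latt bu = latt (bsc γ⁻¹ (inv_ne_zero hγ0) (bb z)) :=
    latt_congr _ _ (funext fun i => by rw [hbuv i, bsc_apply])
  set Ucoe : Set (Fin d → ℝ) := (latt bu : Set (Fin d → ℝ)) with hUcoe
  set xa : (j : Fin m) → (Fin d → Fin (p j)) → (Fin d → ℝ) :=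
    fun j a => ∑ i, ((a i : ℤ)) • bb j i with hxadef
  set pc : Fin m → ℝ := fun j => s j * γ with hpcdef
  have hpc0 : ∀ j, 0 < pc j := fun j => mul_pos (hspos j) hγpos
  have hpcγ : ∀ j, pc j * γ⁻¹ = s j := by
    intro j; rw [hpcdef]; field_simp
  have hpiece : ∀ j (a : Fin d → Fin (p j)),
      (fun x => pc j • (x + (pc j)⁻¹ • (w j + xa j a))) '' Ucoe
        = (fun x => (w j + xa j a) + x) '' (latt (bsc (s j) (hs0 j) (bb z)) : Set (Fin d → ℝ)) := by
    intro j a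
    ext x
    constructor
    · rintro ⟨yu, hyu, rfl⟩
      rw [hUcoe, SetLike.mem_coe, hUeq] at hyu
      obtain ⟨y, hy, rfl⟩ := (mem_latt_bsc _ _ _ _).mp hyu
      refine ⟨s j • y, (mem_latt_bsc _ _ _ _).mpr ⟨y, hy, rfl⟩, ?_⟩
      show (w j + xa j a) + s j • y = pc j • (γ⁻¹ • y + (pc j)⁻¹ • (w j + xa j a))
      rw [smul_add, smul_smul, smul_smul, mul_inv_cancel₀ (hpc0 j).ne', one_smul, hpcγ j]
      abel
    · rintro ⟨ys, hys, rfl⟩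
      rw [SetLike.mem_coe] at hys
      obtain ⟨y, hy, rfl⟩ := (mem_latt_bsc _ _ _ _).mp hys
      refine ⟨γ⁻¹ • y, ?_, ?_⟩
      · rw [hUcoe, SetLike.mem_coe, hUeq]
        exact (mem_latt_bsc _ _ _ _).mpr ⟨y, hy, rfl⟩
      show pc j • (γ⁻¹ • y + (pc j)⁻¹ • (w j + xa j a)) = (w j + xa j a) + s j • y
      rw [smul_add, smul_smul, smul_smul, mul_inv_cancel₀ (hpc0 j).ne', one_smul, hpcγ j]
      abel
  have hLdec : ∀ j, L j = ⋃ (a : Fin d → Fin (p j)),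
      (fun x => (w j + xa j a) + x) '' (latt (bsc (s j) (hs0 j) (bb z)) : Set (Fin d → ℝ)) := by
    intro j
    rw [hLL j]
    ext x
    simp only [Set.mem_image, Set.mem_iUnion]
    constructor
    · rintro ⟨y, hy, rfl⟩
      obtain ⟨a, ha⟩ := cover j y hy
      refine ⟨a, y - xa j a, ?_, by abel⟩
      exact ha
    · rintro ⟨a, yy, hyy, rfl⟩
      refine ⟨xa j a + yy, Submodule.add_mem _ (xa_mem (bb j) _) (hSsub j hyy), by abel⟩
  -- final assembly with dedup
  set pieceSet : ℝ × (Fin d → ℝ) → Set (Fin d → ℝ) :=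
    fun q => (fun x => q.1 • (x + q.2)) '' Ucoe with hpsdef
  set f : ((j : Fin m) × (Fin d → Fin (p j))) → ℝ × (Fin d → ℝ) :=
    fun σ => (pc σ.1, (pc σ.1)⁻¹ • (w σ.1 + xa σ.1 σ.2)) with hfdef
  have hfpiece : ∀ σ, pieceSet (f σ)
      = (fun x => (w σ.1 + xa σ.1 σ.2) + x) ''
        (latt (bsc (s σ.1) (hs0 σ.1) (bb z)) : Set (Fin d → ℝ)) := by
    intro σ
    rw [hpsdef, hfdef]
    exact hpiece σ.1 σ.2
  have hcover_union : (⋃ i, L i) = ⋃ σ, pieceSet (f σ) := by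
    ext x
    simp only [Set.mem_iUnion]
    constructor
    · rintro ⟨j, hj⟩
      rw [hLdec j] at hj
      obtain ⟨a, ha⟩ := Set.mem_iUnion.mp hj
      exact ⟨⟨j, a⟩, by rw [hfpiece]; exact ha⟩
    · rintro ⟨σ, hσ⟩
      refine ⟨σ.1, ?_⟩
      rw [hLdec σ.1]
      apply Set.mem_iUnion.mpr ⟨σ.2, ?_⟩
      rw [hfpiece] at hσ
      exact hσ
  haveI : Nonempty ((j : Fin m) × (Fin d → Fin (p j))) :=
    ⟨⟨z, fun _ => ⟨0, hp z⟩⟩⟩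
  set Q : Finset (ℝ × (Fin d → ℝ)) := Finset.univ.image f with hQdef
  set T : Finset (Set (Fin d → ℝ)) := Q.image pieceSet with hTdef
  have hTne : T.Nonempty :=
    Finset.image_nonempty.mpr (Finset.image_nonempty.mpr Finset.univ_nonempty)
  have hchoice : ∀ kk : Fin T.card, ∃ qq : ℝ × (Fin d → ℝ),
      qq ∈ Q ∧ pieceSet qq = ((T.equivFin.symm kk : { x // x ∈ T }) : Set (Fin d → ℝ)) := by
    intro kk
    obtain ⟨q0, hq0, he0⟩ := Finset.mem_image.mp (T.equivFin.symm kk).2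
    exact ⟨q0, hq0, he0⟩
  choose qq hqQ hqEq using hchoice
  have hσex : ∀ kk, ∃ σ, f σ = qq kk := by
    intro kk
    obtain ⟨σ, _, hσ⟩ := Finset.mem_image.mp (hqQ kk)
    exact ⟨σ, hσ⟩
  set cc : Fin T.card → ℝ := fun kk => (qq kk).1 with hcc
  set vvv : Fin T.card → (Fin d → ℝ) := fun kk => (qq kk).2 with hvv
  have hpiece_cc : ∀ kk, (fun x => cc kk • (x + vvv kk)) '' Ucoe = pieceSet (qq kk) := by
    intro kk; rfl
  refine ⟨Ucoe, ⟨bu, hbu1, rfl⟩, T.card, Finset.card_pos.mpr hTne, cc, vvv, ?_, ?_, ?_⟩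
  · -- positivity
    intro kk
    obtain ⟨σ, hσ⟩ := hσex kk
    have : cc kk = pc σ.1 := by simp only [hcc]; rw [← hσ]
    rw [this]
    exact hpc0 σ.1
  · -- union
    rw [hcover_union]
    ext x
    simp only [Set.mem_iUnion]
    constructor
    · rintro ⟨σ, hσ⟩
      have hfQ : f σ ∈ Q := Finset.mem_image_of_mem f (Finset.mem_univ σ)
      have hfT : pieceSet (f σ) ∈ T := Finset.mem_image_of_mem _ hfQ
      refine ⟨T.equivFin ⟨pieceSet (f σ), hfT⟩, ?_⟩
      have hback := hqEq (T.equivFin ⟨pieceSet (f σ), hfT⟩)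
      rw [Equiv.symm_apply_apply] at hback
      rw [hpiece_cc, hback]
      exact hσ
    · rintro ⟨kk, hkk⟩
      obtain ⟨σ, hσ⟩ := hσex kk
      refine ⟨σ, ?_⟩
      rw [hpiece_cc, ← hσ] at hkk
      exact hkk
  · -- disjointness
    intro kk kk' hne hrat
    obtain ⟨σ, hσ⟩ := hσex kk
    obtain ⟨σ', hσ'⟩ := hσex kk'
    obtain ⟨q, hq⟩ := hrat
    have hccval : ∀ kk2 σ2, f σ2 = qq kk2 → cc kk2 = (δ (rep σ2.1))⁻¹ * (K : ℝ) * γ := by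
      intro kk2 σ2 hσ2
      simp only [hcc]
      rw [← hσ2]
    have hcck : cc kk = (δ (rep σ.1))⁻¹ * (K : ℝ) * γ := hccval kk σ hσ
    have hcck' : cc kk' = (δ (rep σ'.1))⁻¹ * (K : ℝ) * γ := hccval kk' σ' hσ'
    have hKpos' : (0:ℝ) < K := by exact_mod_cast hKpos
    have hqval : (q : ℝ) * δ (rep σ.1) = δ (rep σ'.1) := by
      rw [hcck, hcck'] at hq
      have h1 := hδ (rep σ.1)
      have h2 := hδ (rep σ'.1)
      field_simp at hq
      have hKγ : (K:ℝ) * γ ≠ 0 := (mul_pos hKpos' hγpos).ne'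
      have hq2 : ((K:ℝ) * γ) * δ (rep σ'.1) = ((K:ℝ) * γ) * ((q:ℝ) * δ (rep σ.1)) := by
        linear_combination ((K:ℝ) * γ) * hq
      exact (mul_left_cancel₀ hKγ hq2).symm
    have hrel' : rel (rep σ'.1) (rep σ.1) := ⟨q, hqval⟩
    have hreps : rep σ'.1 = rep σ.1 := by
      have hh := hrep_eq hrel'
      rw [hrep_eq (hrep_mem σ'.1), hrep_eq (hrep_mem σ.1)] at hh
      exact hh
    have hss : s σ.1 = s σ'.1 := by
      simp only [hsdef]
      rw [hreps]
    have hSeq : latt (bsc (s σ.1) (hs0 σ.1) (bb z)) = latt (bsc (s σ'.1) (hs0 σ'.1) (bb z)) :=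
      latt_congr _ _ (funext fun i => by rw [bsc_apply, bsc_apply, hss])
    have hp1 : pieceSet (qq kk) = (fun x => (w σ.1 + xa σ.1 σ.2) + x) ''
        (latt (bsc (s σ.1) (hs0 σ.1) (bb z)) : Set (Fin d → ℝ)) := by
      rw [← hσ]; exact hfpiece σ
    have hp2 : pieceSet (qq kk') = (fun x => (w σ'.1 + xa σ'.1 σ'.2) + x) ''
        (latt (bsc (s σ.1) (hs0 σ.1) (bb z)) : Set (Fin d → ℝ)) := by
      rw [← hσ', hfpiece σ', hSeq]
    have hpieces_ne : pieceSet (qq kk) ≠ pieceSet (qq kk') := by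
      intro heq
      apply hne
      have h1' := hqEq kk
      have h2' := hqEq kk'
      rw [heq] at h1'
      have hvals : ((T.equivFin.symm kk : { x // x ∈ T }) : Set (Fin d → ℝ))
          = ((T.equivFin.symm kk' : { x // x ∈ T }) : Set (Fin d → ℝ)) := by
        rw [← h1', ← h2']
      exact T.equivFin.symm.injective (Subtype.ext hvals)
    rcases coset_eq_or_disjoint (latt (bsc (s σ.1) (hs0 σ.1) (bb z)))
        (w σ.1 + xa σ.1 σ.2) (w σ'.1 + xa σ'.1 σ'.2) with hEq | hDis
    · exact absurd (by rw [hp1, hp2, hEq]) hpieces_ne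
    · rw [hpiece_cc, hpiece_cc, hp1, hp2]
      exact hDis
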